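/- For all integers r, s ≥ 2, the mobile general position number of the Cartesian product of the complete graph K_r and the path P_s equals r, i.e., mob(K_r □ P_s) = r. -/

import Mathlib

open SimpleGraph

/-- `S` is a general position set of `G`: for all `u, v ∈ S`, every shortest `u,v`-path
contains no vertex of `S` other than `u` and `v`. -/
def IsGPSet {V : Type*} (G : SimpleGraph V) (S : Set V) : Prop :=
  ∀ u ∈ S, ∀ v ∈ S, ∀ p : G.Walk u v, p.IsPath → p.length = G.dist u v →
    ∀ w ∈ p.support, w ∈ S → w = u ∨ w = v

/-- A legal move from the configuration `S` to the configuration `T`: a robot at `u ∈ S`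
moves to an adjacent unoccupied vertex `v ∉ S` so that the resulting configuration
`(S \ {u}) ∪ {v}` is again a general position set. -/
def LegalMove {V : Type*} (G : SimpleGraph V) (S T : Set V) : Prop :=
  IsGPSet G S ∧ ∃ u ∈ S, ∃ v, v ∉ S ∧ G.Adj u v ∧
    T = insert v (S \ {u}) ∧ IsGPSet G T

/-- `S` is a mobile general position set: there is a finite sequence of configurations
`S = S_0, S_1, …, S_k`, each obtained from the previous one by a legal move, whose union
is the whole vertex set. -/
def IsMobileGPSet {V : Type*} (G : SimpleGraph V) (S : Set V) : Prop :=
  IsGPSet G S ∧ ∃ (k : ℕ) (f : ℕ → Set V), f 0 = S ∧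
    (∀ i < k, LegalMove G (f i) (f (i + 1))) ∧
    (⋃ i ∈ Set.Iic k, f i) = Set.univ

/-- The mobile general position number of `G`: the maximum cardinality of a mobile
general position set. -/
noncomputable def mob {V : Type*} (G : SimpleGraph V) : ℕ :=
  sSup {n | ∃ S : Set V, IsMobileGPSet G S ∧ S.ncard = n}

namespace KPAux
variable {r s : ℕ}

abbrev KP (r s : ℕ) : SimpleGraph (Fin r × Fin s) := (⊤ : SimpleGraph (Fin r)) □ pathGraph s

lemma kp_adj {x y : Fin r × Fin s} : (KP r s).Adj x y ↔
    (x.1 ≠ y.1 ∧ x.2 = y.2) ∨ (x.1 = y.1 ∧ (x.2.val + 1 = y.2.val ∨ y.2.val + 1 = x.2.val)) := by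
  constructor
  · rintro (⟨h1, h2⟩ | ⟨h1, h2⟩)
    · exact Or.inl ⟨h1.ne, h2⟩
    · exact Or.inr ⟨h2, pathGraph_adj.mp h1⟩
  · rintro (⟨h1, h2⟩ | ⟨h1, h2⟩)
    · exact Or.inl ⟨h1, h2⟩
    · exact Or.inr ⟨pathGraph_adj.mpr h2, h1⟩

lemma walk_length_lb : ∀ {x y : Fin r × Fin s} (p : (KP r s).Walk x y),
    Nat.dist x.2.val y.2.val + (if x.1 = y.1 then 0 else 1) ≤ p.length := by
  intro x y p
  induction p with
  | nil => simp [Nat.dist]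
  | @cons x z y h q ih =>
    rcases kp_adj.mp h with ⟨h1, h2⟩ | ⟨h1, h2⟩
    · rw [Walk.length_cons]
      rw [h2]
      by_cases hzy : z.1 = y.1 <;> by_cases hxy : x.1 = y.1 <;>
        simp_all <;> omega
    · rw [Walk.length_cons, h1]
      have hd : Nat.dist x.2.val y.2.val ≤ Nat.dist z.2.val y.2.val + 1 := by
        simp [Nat.dist] at *; omega
      by_cases hzy : z.1 = y.1 <;> simp_all <;> omega

def hw (a : Fin r) (m : ℕ) (hm : m < s) : (d : ℕ) → (h : m + d < s) →
    (KP r s).Walk (a, ⟨m, hm⟩) (a, ⟨m + d, h⟩)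
  | 0, _ => Walk.nil
  | d + 1, h => (hw a m hm d (by omega)).concat
      (show (KP r s).Adj _ _ from Or.inr ⟨pathGraph_adj.mpr (Or.inl rfl), rfl⟩)

lemma hw_length (a : Fin r) (m : ℕ) (hm : m < s) (d : ℕ) (h : m + d < s) :
    (hw a m hm d h).length = d := by
  induction d with
  | zero => rfl
  | succ d ih => rw [hw, Walk.length_concat, ih]

lemma hw_mem (a : Fin r) (m : ℕ) (hm : m < s) (d : ℕ) (h : m + d < s) (c : Fin s)
    (h1 : m ≤ c.val) (h2 : c.val ≤ m + d) : (a, c) ∈ (hw a m hm d h).support := by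
  induction d with
  | zero =>
    have : c = ⟨m, hm⟩ := Fin.ext (show c.val = m by omega)
    subst this; simp [hw]
  | succ d ih =>
    rw [hw, Walk.support_concat, List.mem_append]
    rcases Nat.lt_or_ge c.val (m + d + 1) with hc | hc
    · exact Or.inl (ih (by omega) (by omega))
    · have : c = ⟨m + (d+1), h⟩ := Fin.ext (show c.val = m + (d+1) by omega)
      subst this; simp

def hwalk (a : Fin r) (c d : Fin s) (hcd : c.val ≤ d.val) : (KP r s).Walk (a, c) (a, d) :=
  ((hw a c.val c.isLt (d.val - c.val) (by omega)).copy
    (by simp) (by congr 1; exact Fin.ext (by simp; omega)))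

lemma hwalk_length (a : Fin r) (c d : Fin s) (hcd : c.val ≤ d.val) :
    (hwalk a c d hcd).length = d.val - c.val := by
  simp [hwalk, hw_length]

lemma hwalk_mem (a : Fin r) (c d : Fin s) (hcd : c.val ≤ d.val) (e : Fin s)
    (h1 : c.val ≤ e.val) (h2 : e.val ≤ d.val) : (a, e) ∈ (hwalk a c d hcd).support := by
  simp only [hwalk, Walk.support_copy]
  exact hw_mem a c.val c.isLt (d.val - c.val) (by omega) e h1 (by omega)

lemma exists_walk_dist (x y : Fin r × Fin s) :
    ∃ w : (KP r s).Walk x y,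
      w.length = Nat.dist x.2.val y.2.val + (if x.1 = y.1 then 0 else 1) := by
  obtain ⟨a, c⟩ := x
  obtain ⟨b, d⟩ := y
  have base : ∀ (a : Fin r) (c d : Fin s), ∃ w : (KP r s).Walk (a, c) (a, d),
      w.length = Nat.dist c.val d.val := by
    intro a c d
    rcases Nat.le_total c.val d.val with h | h
    · exact ⟨hwalk a c d h, by rw [hwalk_length]; simp [Nat.dist]; omega⟩
    · exact ⟨(hwalk a d c h).reverse, by
        rw [Walk.length_reverse, hwalk_length]; simp [Nat.dist]; omega⟩
  by_cases hab : a = b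
  · subst hab
    obtain ⟨w, hw⟩ := base a c d
    exact ⟨w, by simp [hw]⟩
  · obtain ⟨w, hww⟩ := base a c d
    refine ⟨w.concat (show (KP r s).Adj (a, d) (b, d) from Or.inl ⟨hab, rfl⟩), ?_⟩
    rw [Walk.length_concat, hww]
    simp [hab]

lemma kp_dist (x y : Fin r × Fin s) :
    (KP r s).dist x y = Nat.dist x.2.val y.2.val + (if x.1 = y.1 then 0 else 1) := by
  obtain ⟨w, hwl⟩ := exists_walk_dist x y
  refine le_antisymm (hwl ▸ SimpleGraph.dist_le w) ?_
  obtain ⟨p, hp⟩ := Reachable.exists_walk_length_eq_dist ⟨w⟩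
  exact hp ▸ walk_length_lb p

lemma card_le_of_injOn {S : Set (Fin r × Fin s)} (h : Set.InjOn Prod.fst S) :
    S.ncard ≤ r := by
  rw [← Set.ncard_image_of_injOn h]
  calc (Prod.fst '' S).ncard ≤ (Set.univ : Set (Fin r)).ncard :=
        Set.ncard_le_ncard (Set.subset_univ _) Set.finite_univ
    _ = r := by rw [Set.ncard_univ]; simp

lemma exists_doubled {S : Set (Fin r × Fin s)} (h : r + 1 ≤ S.ncard) :
    ∃ (i : Fin r) (j1 j2 : Fin s), j1.val < j2.val ∧ (i, j1) ∈ S ∧ (i, j2) ∈ S := by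
  by_contra hcon
  push_neg at hcon
  have hinj : Set.InjOn Prod.fst S := by
    rintro ⟨a, c⟩ hx ⟨b, d⟩ hy (hfst : a = b)
    subst hfst
    rcases Nat.lt_trichotomy c.val d.val with hlt | heq | hlt
    · exact absurd hy ((hcon a c d hlt hx))
    · exact congrArg _ (Fin.ext heq)
    · exact absurd hx ((hcon a d c hlt hy))
  have := card_le_of_injOn hinj
  omega


section corners
variable {S : Set (Fin r × Fin s)} (hS : IsGPSet (KP r s) S)
include hS

lemma gpX1 {a b : Fin r} {c d : Fin s} (hu : (a, c) ∈ S) (hv : (b, d) ∈ S)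
    (hab : a ≠ b) (hcd : c.val ≤ d.val) (e : Fin s) (h1 : c.val < e.val)
    (h2 : e.val ≤ d.val) : (a, e) ∉ S := by
  intro heS
  set p := (hwalk a c d hcd).concat
    (show (KP r s).Adj (a, d) (b, d) from Or.inl ⟨hab, rfl⟩) with hp
  have hlen : p.length = (KP r s).dist (a, c) (b, d) := by
    rw [hp, Walk.length_concat, hwalk_length, kp_dist]
    simp [hab, Nat.dist]; omega
  have hmem : ((a, e) : Fin r × Fin s) ∈ p.support := by
    rw [hp, Walk.support_concat, List.mem_append]
    exact Or.inl (hwalk_mem a c d hcd e (le_of_lt h1) h2)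
  rcases hS _ hu _ hv p (p.isPath_of_length_eq_dist hlen) hlen _ hmem heS with h | h
  · exact absurd (congrArg (fun z => z.2.val) h) (by simp; omega)
  · exact hab (congrArg Prod.fst h)

lemma gpX2 {a b : Fin r} {c d : Fin s} (hu : (a, c) ∈ S) (hv : (b, d) ∈ S)
    (hab : a ≠ b) (hcd : c.val ≤ d.val) (e : Fin s) (h1 : c.val ≤ e.val)
    (h2 : e.val < d.val) : (b, e) ∉ S := by
  intro heS
  set p := Walk.cons (show (KP r s).Adj (a, c) (b, c) from Or.inl ⟨hab, rfl⟩)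
    (hwalk b c d hcd) with hp
  have hlen : p.length = (KP r s).dist (a, c) (b, d) := by
    rw [hp, Walk.length_cons, hwalk_length, kp_dist]
    simp [hab, Nat.dist]; omega
  have hmem : ((b, e) : Fin r × Fin s) ∈ p.support := by
    rw [hp, Walk.support_cons]
    exact List.mem_cons_of_mem _ (hwalk_mem b c d hcd e h1 (le_of_lt h2))
  rcases hS _ hu _ hv p (p.isPath_of_length_eq_dist hlen) hlen _ hmem heS with h | h
  · exact hab (congrArg Prod.fst h).symm
  · exact absurd (congrArg (fun z => z.2.val) h) (by simp; omega)

lemma gpY {a : Fin r} {c d : Fin s} (hu : (a, c) ∈ S) (hv : (a, d) ∈ S)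
    (hcd : c.val < d.val) (e : Fin s) (h1 : c.val < e.val) (h2 : e.val < d.val) :
    (a, e) ∉ S := by
  intro heS
  set p := hwalk a c d (le_of_lt hcd) with hp
  have hlen : p.length = (KP r s).dist (a, c) (a, d) := by
    rw [hp, hwalk_length, kp_dist]
    simp [Nat.dist]; omega
  have hmem : ((a, e) : Fin r × Fin s) ∈ p.support :=
    hwalk_mem a c d (le_of_lt hcd) e (le_of_lt h1) (le_of_lt h2)
  rcases hS _ hu _ hv p (p.isPath_of_length_eq_dist hlen) hlen _ hmem heS with h | h
  · exact absurd (congrArg (fun z => z.2.val) h) (by simp; omega)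
  · exact absurd (congrArg (fun z => z.2.val) h) (by simp; omega)

lemma gpB {i : Fin r} {j1 j2 : Fin s} (h1 : (i, j1) ∈ S) (h2 : (i, j2) ∈ S)
    (hj : j1.val < j2.val) {c : Fin r} {m : Fin s} (hm : (c, m) ∈ S) (hci : c ≠ i) :
    j1.val < m.val ∧ m.val < j2.val := by
  constructor
  · by_contra h
    push_neg at h
    exact gpX2 hS hm h2 hci (by omega) j1 h hj h1
  · by_contra h
    push_neg at h
    exact gpX1 hS h1 hm (Ne.symm hci) (by omega) j2 hj h h2

lemma gpRow2 {i : Fin r} {j1 j2 : Fin s} (h1 : (i, j1) ∈ S) (h2 : (i, j2) ∈ S)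
    (hj : j1.val < j2.val) {m : Fin s} (hm : (i, m) ∈ S) :
    m = j1 ∨ m = j2 := by
  rcases Nat.lt_trichotomy m.val j1.val with h | h | h
  · exact absurd h1 (gpY hS hm h2 (by omega) j1 h hj)
  · exact Or.inl (Fin.ext h)
  · rcases Nat.lt_trichotomy m.val j2.val with h' | h' | h'
    · exact absurd hm (gpY hS h1 h2 hj m h h')
    · exact Or.inr (Fin.ext h')
    · exact absurd h2 (gpY hS h1 hm (by omega) j2 hj h')

/-- in the rest of a doubled configuration, fst is injective and avoids row i -/
lemma gpRest {i : Fin r} {j1 j2 : Fin s} (h1 : (i, j1) ∈ S) (h2 : (i, j2) ∈ S)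
    (hj : j1.val < j2.val) :
    (∀ x ∈ S \ {(i, j1), (i, j2)}, x.1 ≠ i) ∧
    (∀ x ∈ S \ {(i, j1), (i, j2)}, ∀ y ∈ S \ {(i, j1), (i, j2)}, x.1 = y.1 → x = y) := by
  have hrow : ∀ x ∈ S \ {(i, j1), (i, j2)}, x.1 ≠ i := by
    rintro ⟨a, m⟩ ⟨hxS, hxne⟩ (rfl : a = i)
    rcases gpRow2 hS h1 h2 hj hxS with rfl | rfl
    · exact hxne (Or.inl rfl)
    · exact hxne (Or.inr rfl)
  refine ⟨hrow, ?_⟩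
  rintro ⟨a, m1⟩ hx ⟨b, m2⟩ hy (rfl : a = b)
  by_contra hne
  have hm : m1.val ≠ m2.val := fun h => hne (by rw [Fin.ext h])
  have hai : a ≠ i := hrow _ hx
  -- both strictly between j1 j2 w.r.t. doubled row i; and j1 strictly between m1 m2
  have hb1 := gpB hS h1 h2 hj hx.1 hai
  have hb2 := gpB hS h1 h2 hj hy.1 hai
  rcases Nat.lt_or_ge m1.val m2.val with hlt | hge
  · have := gpB hS hx.1 hy.1 hlt h1 (Ne.symm hai)
    omega
  · have := gpB hS hy.1 hx.1 (by omega) h1 (Ne.symm hai)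
    omega

lemma gp_card_le : S.ncard ≤ r + 1 := by
  by_contra hcon
  push_neg at hcon
  obtain ⟨i, j1, j2, hj, h1, h2⟩ := exists_doubled (S := S) (by omega)
  obtain ⟨hrow, hinj⟩ := gpRest hS h1 h2 hj
  have hsub : Prod.fst '' (S \ {(i, j1), (i, j2)}) ⊆ Set.univ \ {i} := by
    rintro b ⟨x, hx, rfl⟩
    exact ⟨trivial, hrow x hx⟩
  have hcard1 : (S \ {(i, j1), (i, j2)}).ncard ≤ r - 1 := by
    rw [← Set.ncard_image_of_injOn (fun x hx y hy h => hinj x hx y hy h)]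
    calc (Prod.fst '' (S \ {(i, j1), (i, j2)})).ncard
        ≤ (Set.univ \ {i} : Set (Fin r)).ncard :=
          Set.ncard_le_ncard hsub (Set.finite_univ.subset (Set.subset_univ _))
      _ = r - 1 := by
          rw [Set.ncard_diff (Set.subset_univ {i})]
          simp [Set.ncard_univ]
  have hsub2 : S ⊆ insert (i, j1) (insert (i, j2) (S \ {(i, j1), (i, j2)})) := by
    intro x hx
    by_cases hx1 : x = (i, j1)
    · exact Or.inl hx1
    by_cases hx2 : x = (i, j2)
    · exact Or.inr (Or.inl hx2)
    · exact Or.inr (Or.inr ⟨hx, by simp [hx1, hx2]⟩)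
  have := Set.ncard_le_ncard hsub2 (Set.toFinite _)
  have h3 := Set.ncard_insert_le (i, j1) (insert (i, j2) (S \ {(i, j1), (i, j2)}))
  have h4 := Set.ncard_insert_le (i, j2) (S \ {(i, j1), (i, j2)})
  have hr1 : 1 ≤ r := Fin.pos i
  omega

end corners
end KPAux

namespace KPAux
variable {r s : ℕ}
section corners2
variable {S : Set (Fin r × Fin s)} (hS : IsGPSet (KP r s) S)
include hS

lemma gp_rows_full (hcard : S.ncard = r + 1) {i : Fin r} {j1 j2 : Fin s}
    (h1 : (i, j1) ∈ S) (h2 : (i, j2) ∈ S) (hj : j1.val < j2.val) :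
    ∀ b : Fin r, b ≠ i → ∃ m : Fin s, (b, m) ∈ S ∧ j1.val < m.val ∧ m.val < j2.val := by
  intro b hb
  obtain ⟨hrow, hinj⟩ := gpRest hS h1 h2 hj
  set rest := S \ {(i, j1), (i, j2)} with hrest
  have hpair_sub : ({(i, j1), (i, j2)} : Set (Fin r × Fin s)) ⊆ S := by
    rintro x (rfl | rfl)
    exacts [h1, h2]
  have hpair_card : ({(i, j1), (i, j2)} : Set (Fin r × Fin s)).ncard = 2 :=
    Set.ncard_pair (by intro h; exact absurd (congrArg (fun z => z.2.val) h) (by simp; omega))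
  have hrestcard : rest.ncard = r - 1 := by
    rw [hrest, Set.ncard_diff hpair_sub, hpair_card, hcard]
    omega
  have hsub : Prod.fst '' rest ⊆ Set.univ \ {i} := by
    rintro b ⟨x, hx, rfl⟩
    exact ⟨trivial, hrow x hx⟩
  have himgcard : (Prod.fst '' rest).ncard = r - 1 := by
    rw [Set.ncard_image_of_injOn (fun x hx y hy h => hinj x hx y hy h), hrestcard]
  have hucard : (Set.univ \ {i} : Set (Fin r)).ncard = r - 1 := by
    rw [Set.ncard_diff (Set.subset_univ {i})]
    simp [Set.ncard_univ]
  have heq : Prod.fst '' rest = Set.univ \ {i} :=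
    Set.eq_of_subset_of_ncard_le hsub (by omega) (Set.finite_univ.subset (Set.subset_univ _))
  have hbmem : b ∈ Prod.fst '' rest := heq ▸ ⟨trivial, hb⟩
  obtain ⟨⟨b', m⟩, hxrest, rfl⟩ := hbmem
  obtain ⟨hbt1, hbt2⟩ := gpB hS h1 h2 hj hxrest.1 hb
  exact ⟨m, hxrest.1, hbt1, hbt2⟩

lemma move_preserves (hcard : S.ncard = r + 1)
    {i0 : Fin r} {c1 c2 : Fin s} (h1 : (i0, c1) ∈ S) (h2 : (i0, c2) ∈ S)
    (hc : c1.val < c2.val) {u v : Fin r × Fin s} (hu : u ∈ S) (hv : v ∉ S)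
    (hadj : (KP r s).Adj u v) (hT : IsGPSet (KP r s) (insert v (S \ {u}))) :
    ∃ d1 d2 : Fin s, d1.val < d2.val ∧ (i0, d1) ∈ insert v (S \ {u}) ∧
      (i0, d2) ∈ insert v (S \ {u}) := by
  set T := insert v (S \ {u}) with hTdef
  by_cases hui : u.1 = i0
  · -- u is one of the two row-i0 robots
    have huS : (i0, u.2) ∈ S := by rw [← hui]; exact hu
    have hcu : u.2 = c1 ∨ u.2 = c2 := gpRow2 hS h1 h2 hc huS
    -- co : the other column
    obtain ⟨co, hco, hcone⟩ : ∃ co : Fin s, (i0, co) ∈ S ∧ co.val ≠ u.2.val := by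
      rcases hcu with h | h
      · exact ⟨c2, h2, by rw [h]; omega⟩
      · exact ⟨c1, h1, by rw [h]; omega⟩
    have hcoT : (i0, co) ∈ T := by
      refine Set.mem_insert_of_mem _ ⟨hco, ?_⟩
      simp only [Set.mem_singleton_iff]
      intro h
      exact hcone (congrArg (fun z => z.2.val) h)
    by_cases hvi : v.1 = i0
    · -- v stays in row i0 : T doubled via v and (i0, co)
      have hvT : (i0, v.2) ∈ T := by
        rw [← hvi]; exact Set.mem_insert _ _
      have hvne : v.2.val ≠ co.val := by
        intro h
        apply hv
        have : v = (i0, co) := Prod.ext hvi (Fin.ext h)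
        rw [this]; exact hco
      rcases Nat.lt_or_ge v.2.val co.val with hlt | hge
      · exact ⟨v.2, co, hlt, hvT, hcoT⟩
      · exact ⟨co, v.2, by omega, hcoT, hvT⟩
    · -- v moves to another row; leads to contradiction
      exfalso
      have hvcol : v.2 = u.2 := by
        rcases kp_adj.mp hadj with ⟨_, h⟩ | ⟨h, _⟩
        · exact h.symm
        · exact absurd (h ▸ hui) hvi
      obtain ⟨m, hmS, hm1, hm2⟩ := gp_rows_full hS hcard h1 h2 hc v.1 hvi
      have hmT : (v.1, m) ∈ T := by
        refine Set.mem_insert_of_mem _ ⟨hmS, ?_⟩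
        simp only [Set.mem_singleton_iff]
        intro h
        have hvu : v.1 = u.1 := by simpa using congrArg Prod.fst h
        exact hvi (hvu.trans hui)
      have hvT : (v.1, v.2) ∈ T := Set.mem_insert _ _
      -- row v.1 in T has robots at columns v.2 (= u.2) and m
      have hcune : u.2.val ≠ m.val := by
        rcases hcu with h | h <;> rw [h] <;> omega
      rcases hcu with hcu1 | hcu2
      · -- u.2 = c1, co = c2 (co ≠ u.2 and co ∈ {c1,c2})
        have hcoval : co = c2 := by
          rcases gpRow2 hS h1 h2 hc hco with h | h
          · exact absurd (by rw [h, hcu1]) hcone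
          · exact h
        have hvm : v.2.val < m.val := by rw [hvcol, hcu1]; omega
        have := gpB hT hvT hmT hvm hcoT (Ne.symm hvi)
        rw [hcoval, hvcol, hcu1] at this
        omega
      · have hcoval : co = c1 := by
          rcases gpRow2 hS h1 h2 hc hco with h | h
          · exact h
          · exact absurd (by rw [h, hcu2]) hcone
        have hvm : m.val < v.2.val := by rw [hvcol, hcu2]; omega
        have := gpB hT hmT hvT hvm hcoT (Ne.symm hvi)
        rw [hcoval, hvcol, hcu2] at this
        omega
  · -- u not in row i0
    have h1T : (i0, c1) ∈ T := by
      refine Set.mem_insert_of_mem _ ⟨h1, ?_⟩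
      simp only [Set.mem_singleton_iff]
      intro h
      exact hui (congrArg Prod.fst h).symm
    have h2T : (i0, c2) ∈ T := by
      refine Set.mem_insert_of_mem _ ⟨h2, ?_⟩
      simp only [Set.mem_singleton_iff]
      intro h
      exact hui (congrArg Prod.fst h).symm
    exact ⟨c1, c2, hc, h1T, h2T⟩

end corners2

lemma mobile_card_le (hr : 2 ≤ r) (hs : 2 ≤ s) {S : Set (Fin r × Fin s)}
    (h : IsMobileGPSet (KP r s) S) : S.ncard ≤ r := by
  obtain ⟨hS0, k, f, hf0, hmoves, hcover⟩ := h
  have hle := gp_card_le hS0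
  rcases Nat.lt_or_ge S.ncard (r + 1) with hlt | hge
  · omega
  have hcard : S.ncard = r + 1 := by omega
  obtain ⟨i0, j1, j2, hj, h1, h2⟩ := exists_doubled (S := S) (by omega)
  have hinv : ∀ t, t ≤ k → IsGPSet (KP r s) (f t) ∧ (f t).ncard = r + 1 ∧
      ∃ c1 c2 : Fin s, c1.val < c2.val ∧ (i0, c1) ∈ f t ∧ (i0, c2) ∈ f t := by
    intro t
    induction t with
    | zero => intro _; rw [hf0]; exact ⟨hS0, hcard, j1, j2, hj, h1, h2⟩
    | succ t ih =>
      intro hk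
      obtain ⟨hG, hc, c1, c2, hcc, hm1, hm2⟩ := ih (by omega)
      obtain ⟨_, u, hu, v, hv, hadj, hTeq, hTgp⟩ := hmoves t (by omega)
      rw [hTeq] at hTgp ⊢
      refine ⟨hTgp, ?_, ?_⟩
      · rw [Set.ncard_insert_of_notMem (by simp [hv]) (Set.toFinite _),
          Set.ncard_diff_singleton_of_mem hu, hc]
        omega
      · exact move_preserves hG hc hm1 hm2 hcc hu hv hadj hTgp
  -- find row a ≠ i0
  obtain ⟨a, ha⟩ : ∃ a : Fin r, a ≠ i0 := by
    rcases Nat.lt_or_ge 0 i0.val with h | h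
    · exact ⟨⟨0, by omega⟩, by intro hh; rw [Fin.ext_iff] at hh; simp at hh; omega⟩
    · exact ⟨⟨1, by omega⟩, by intro hh; rw [Fin.ext_iff] at hh; simp at hh; omega⟩
  have hmem : ((a, ⟨0, by omega⟩) : Fin r × Fin s) ∈ ⋃ i ∈ Set.Iic k, f i := by
    rw [hcover]; trivial
  simp only [Set.mem_iUnion, Set.mem_Iic] at hmem
  obtain ⟨t, ht, hmemt⟩ := hmem
  obtain ⟨hG, _, c1, c2, hcc, hm1, hm2⟩ := hinv t ht
  have := gpB hG hm1 hm2 hcc hmemt ha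
  simp at this
end KPAux

namespace KPAux
variable {r s : ℕ}

lemma gp_window (c : Fin r → ℕ) (hc : ∀ i, c i < s) (e : ℕ)
    (hwin : ∀ i, c i = e ∨ c i = e + 1) :
    IsGPSet (KP r s) {x : Fin r × Fin s | x.2.val = c x.1} := by
  intro u hu v hv p hp hlen w hwmem hwS
  simp only [Set.mem_setOf_eq] at hu hv hwS
  by_cases hab : u.1 = v.1
  · have huv : v = u := by
      refine Prod.ext hab.symm (Fin.ext ?_)
      rw [hu, hv, hab]
    subst huv
    rw [SimpleGraph.dist_self] at hlen
    cases p with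
    | nil => simp only [Walk.support_nil, List.mem_singleton] at hwmem; exact Or.inl hwmem
    | cons h q => simp at hlen
  · rw [kp_dist, if_neg hab] at hlen
    by_cases hcol : u.2.val = v.2.val
    · -- distance 1
      rw [hcol, Nat.dist_self] at hlen
      cases p with
      | nil => simp at hlen
      | cons h q =>
        have hq : q.length = 0 := by simp only [Walk.length_cons] at hlen; omega
        have hqsup : ∀ {z : Fin r × Fin s} (q' : (KP r s).Walk z v), q'.length = 0 →
            q'.support = [v] := by
          intro z q' hq'
          cases q' with
          | nil => rfl
          | cons h' q'' => simp at hq'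
        rw [Walk.support_cons, hqsup q hq] at hwmem
        simp only [List.mem_cons, List.mem_singleton, List.not_mem_nil, or_false] at hwmem
        tauto
    · -- distance 2
      have hd1 : Nat.dist u.2.val v.2.val = 1 := by
        have w1 := hwin u.1
        have w2 := hwin v.1
        simp [Nat.dist]; omega
      rw [hd1] at hlen
      cases p with
      | nil => simp at hlen
      | cons h q =>
        cases q with
        | nil => simp at hlen
        | @cons _ x _ h2 q2 =>
          have hq2 : q2.length = 0 := by simp only [Walk.length_cons] at hlen; omega
          have hqsup : ∀ {z : Fin r × Fin s} (q' : (KP r s).Walk z v), q'.length = 0 →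
              q'.support = [v] := by
            intro z q' hq'
            cases q' with
            | nil => rfl
            | cons h' q'' => simp at hq'
          rw [Walk.support_cons, Walk.support_cons, hqsup q2 hq2] at hwmem
          simp only [List.mem_cons, List.mem_singleton, List.not_mem_nil, or_false] at hwmem
          obtain rfl : x = v := Walk.eq_of_length_eq_zero hq2
          rcases hwmem with rfl | rfl | rfl
          · exact Or.inl rfl
          · -- middle vertex is in S : contradiction
            exfalso
            rcases kp_adj.mp h with ⟨hne, hcol1⟩ | ⟨hrow1, _⟩
            · rcases kp_adj.mp h2 with ⟨hne2, hcol2⟩ | ⟨hrow2, _⟩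
              · exact hcol (by rw [hcol1, hcol2])
              · exact hcol (by rw [hcol1, hwS, hrow2, ← hv])
            · rcases kp_adj.mp h2 with ⟨hne2, hcol2⟩ | ⟨hrow2, _⟩
              · exact hcol (by rw [hu, hrow1, ← hwS, hcol2])
              · exact hab (hrow1.trans hrow2)
          · exact Or.inr rfl
end KPAux

namespace KPAux
variable {r s : ℕ}

def swcol (r t : ℕ) (i : Fin r) : ℕ := if i.val < t % r then t / r + 1 else t / r

lemma swcol_succ (hr : 0 < r) (t : ℕ) (i : Fin r) :
    swcol r (t + 1) i = if i.val = t % r then t / r + 1 else swcol r t i := by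
  have hm : t % r < r := Nat.mod_lt _ hr
  have hdm := Nat.div_add_mod t r
  have hi : i.val < r := i.isLt
  rcases Nat.lt_or_ge (t % r + 1) r with hlt | hge
  · have key : r * (t / r) + t % r + 1 = (t % r + 1) + (t / r) * r := by
      rw [Nat.mul_comm (t / r) r]; omega
    have h1 : (t + 1) % r = t % r + 1 := by
      conv_lhs => rw [← hdm, key]
      rw [Nat.add_mul_mod_self_right, Nat.mod_eq_of_lt hlt]
    have h2 : (t + 1) / r = t / r := by
      conv_lhs => rw [← hdm, key]
      rw [Nat.add_mul_div_right _ _ hr, Nat.div_eq_of_lt hlt]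
      omega
    simp only [swcol, h1, h2]
    split_ifs <;> omega
  · have hge' : t % r + 1 = r := by omega
    have key : r * (t / r) + t % r + 1 = (t / r + 1) * r := by
      rw [Nat.add_mul, Nat.one_mul, Nat.mul_comm (t / r) r]; omega
    have h1 : (t + 1) % r = 0 := by
      conv_lhs => rw [← hdm, key]
      exact Nat.mul_mod_left _ _
    have h2 : (t + 1) / r = t / r + 1 := by
      conv_lhs => rw [← hdm, key]
      exact Nat.mul_div_cancel _ hr
    simp only [swcol, h1, h2]
    split_ifs <;> omega

lemma swcol_le (hr : 0 < r) (t : ℕ) (ht : t ≤ r * (s - 1)) (i : Fin r) :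
    swcol r t i ≤ s - 1 := by
  have hdm := Nat.div_add_mod t r
  have hm : t % r < r := Nat.mod_lt _ hr
  have hq : t / r ≤ s - 1 := by
    have h := Nat.div_le_div_right (c := r) ht
    rwa [Nat.mul_div_cancel_left _ hr] at h
  unfold swcol
  split_ifs with h
  · have h1 : 1 ≤ t % r := by omega
    have h2 : r * (t / r) < r * (s - 1) := by omega
    have := Nat.lt_of_mul_lt_mul_left h2
    omega
  · omega

lemma swcol_quot (hr : 0 < r) (t : ℕ) (ht : t < r * (s - 1)) :
    t / r + 1 ≤ s - 1 := by
  have hdm := Nat.div_add_mod t r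
  have hm : t % r < r := Nat.mod_lt _ hr
  have h2 : r * (t / r) < r * (s - 1) := by omega
  have := Nat.lt_of_mul_lt_mul_left h2
  omega

def swcfg (r s t : ℕ) : Set (Fin r × Fin s) := {x | x.2.val = swcol r t x.1}

lemma cfg_ncard (c : Fin r → ℕ) (hc : ∀ i, c i < s) :
    {x : Fin r × Fin s | x.2.val = c x.1}.ncard = r := by
  have himg : {x : Fin r × Fin s | x.2.val = c x.1} =
      (fun i => (i, (⟨c i, hc i⟩ : Fin s))) '' Set.univ := by
    ext ⟨a, m⟩
    simp only [Set.mem_setOf_eq, Set.image_univ, Set.mem_range]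
    constructor
    · intro h
      exact ⟨a, Prod.ext rfl (Fin.ext (by simp [h]))⟩
    · rintro ⟨i, hi⟩
      have h1 : i = a := congrArg Prod.fst hi
      subst h1
      have h2 : (⟨c i, hc i⟩ : Fin s) = m := congrArg Prod.snd hi
      rw [← h2]
  rw [himg, Set.ncard_image_of_injective _ (fun i j hij => congrArg Prod.fst hij),
    Set.ncard_univ]
  simp

lemma swcfg_gp (hr : 0 < r) (t : ℕ) (ht : t ≤ r * (s - 1)) (hs1 : 1 ≤ s) :
    IsGPSet (KP r s) (swcfg r s t) :=
  gp_window (swcol r t) (fun i => by have := swcol_le (s := s) hr t ht i; omega) (t / r)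
    (fun i => by unfold swcol; split_ifs <;> simp)

lemma swcfg_cover (hr : 0 < r) (x : Fin r × Fin s) :
    ∃ t, t ≤ r * (s - 1) ∧ x ∈ swcfg r s t := by
  refine ⟨x.2.val * r, ?_, ?_⟩
  · have h1 : x.2.val ≤ s - 1 := by have := x.2.isLt; omega
    calc x.2.val * r ≤ (s - 1) * r := Nat.mul_le_mul_right r h1
      _ = r * (s - 1) := Nat.mul_comm _ _
  · show x.2.val = swcol r (x.2.val * r) x.1
    unfold swcol
    rw [Nat.mul_mod_left, Nat.mul_div_cancel _ hr]
    simp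

lemma sweep_mobile (hr : 2 ≤ r) (hs : 2 ≤ s) :
    IsMobileGPSet (KP r s) (swcfg r s 0) ∧ (swcfg r s 0).ncard = r := by
  have hr0 : 0 < r := by omega
  have hs1 : 1 ≤ s := by omega
  constructor
  · refine ⟨swcfg_gp hr0 0 (by omega) hs1, r * (s - 1), fun t => swcfg r s t, rfl, ?_, ?_⟩
    · intro t ht
      have htle : t ≤ r * (s - 1) := le_of_lt ht
      have hmlt : t % r < r := Nat.mod_lt _ hr0
      have hq1 : t / r + 1 ≤ s - 1 := swcol_quot hr0 t ht
      have hqs : t / r < s := by omega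
      have hq1s : t / r + 1 < s := by omega
      refine ⟨swcfg_gp hr0 t htle hs1, (⟨t % r, hmlt⟩, ⟨t / r, hqs⟩), ?_,
        (⟨t % r, hmlt⟩, ⟨t / r + 1, hq1s⟩), ?_, ?_, ?_,
        swcfg_gp hr0 (t + 1) (by omega) hs1⟩
      · show (⟨t / r, hqs⟩ : Fin s).val = swcol r t ⟨t % r, hmlt⟩
        simp [swcol]
      · show ¬ ((⟨t / r + 1, hq1s⟩ : Fin s).val = swcol r t ⟨t % r, hmlt⟩)
        simp [swcol]
      · exact kp_adj.mpr (Or.inr ⟨rfl, Or.inl rfl⟩)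
      · ext ⟨a, m⟩
        simp only [swcfg, Set.mem_insert_iff, Set.mem_diff, Set.mem_singleton_iff,
          Set.mem_setOf_eq]
        rw [swcol_succ hr0 t a]
        by_cases ha : a.val = t % r
        · rw [if_pos ha]
          have ha' : a = (⟨t % r, hmlt⟩ : Fin r) := Fin.ext ha
          have hswa : swcol r t a = t / r := by
            unfold swcol; rw [if_neg (by omega)]
          constructor
          · intro hm'
            exact Or.inl (Prod.ext ha' (Fin.ext hm'))
          · rintro (hveq | ⟨hmem, hne⟩)
            · have := congrArg (fun z => z.2.val) hveq
              simpa using this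
            · exfalso
              apply hne
              rw [hswa] at hmem
              exact Prod.ext ha' (Fin.ext hmem)
        · rw [if_neg ha]
          constructor
          · intro hm'
            refine Or.inr ⟨hm', ?_⟩
            intro h
            exact ha (by simpa using congrArg (fun z => z.1.val) h)
          · rintro (hveq | ⟨hmem, _⟩)
            · exact absurd (by simpa using congrArg (fun z => z.1.val) hveq) ha
            · exact hmem
    · ext x
      simp only [Set.mem_iUnion, Set.mem_Iic, Set.mem_univ, iff_true]
      obtain ⟨t, ht, hx⟩ := swcfg_cover hr0 x
      exact ⟨t, ht, hx⟩
  · exact cfg_ncard (swcol r 0) (fun i => by simp [swcol]; omega)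

end KPAux


theorem mob_completeGraph_boxProd_pathGraph (r s : ℕ) (hr : 2 ≤ r) (hs : 2 ≤ s) :
    mob ((⊤ : SimpleGraph (Fin r)) □ pathGraph s) = r := by
  have hmem : r ∈ {n | ∃ S : Set (Fin r × Fin s),
      IsMobileGPSet ((⊤ : SimpleGraph (Fin r)) □ pathGraph s) S ∧ S.ncard = n} := by
    obtain ⟨h1, h2⟩ := KPAux.sweep_mobile hr hs
    exact ⟨KPAux.swcfg r s 0, h1, h2⟩
  have hub : ∀ n ∈ {n | ∃ S : Set (Fin r × Fin s),
      IsMobileGPSet ((⊤ : SimpleGraph (Fin r)) □ pathGraph s) S ∧ S.ncard = n}, n ≤ r := by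
    rintro n ⟨S, hS, rfl⟩
    exact KPAux.mobile_card_le hr hs hS
  exact le_antisymm (csSup_le ⟨r, hmem⟩ hub) (le_csSup ⟨r, hub⟩ hmem)
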